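/- Let f satisfy Condition B with constant K, let φ be a branching mechanism satisfying Grey's condition, let ψ be an immigration mechanism, let (Q_t)_{t≥0} be the transition semigroup of the CB-process with branching mechanism φ, and let (Q^γ_t)_{t≥0} be the transition semigroup of the CBI-process with branching mechanism φ and immigration mechanism ψ. Then for every probability measure μ on [0,∞) (the common law of the initial states) and every t ≥ 0, one has (as an inequality in [0,∞]): ∫_{[0,∞)} ∫_{[0,∞)} f(y) Q^γ_t(x,dy) μ(dx) ≤ (1/2) K f(2) [ ∫_{[0,∞)} f(y) Q^γ_t(0,dy) + ∫_{[0,∞)} ∫_{[0,∞)} f(y) Q_t(x,dy) μ(dx) ]. -/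

import Mathlib

open MeasureTheory Set Filter
open scoped ENNReal NNReal

noncomputable section

/-- A positive continuous function on `[0,∞)` satisfying Condition A:
there exist `c ≥ 0` and `K > 0` such that `f` is convex on `[c,∞)`,
`f (x*y) ≤ K * f x * f y` for `x, y ∈ [c,∞)`, and `f` is bounded on `[0,c)`. -/
def ConditionA (f : ℝ → ℝ) : Prop :=
  ContinuousOn f (Set.Ici 0) ∧ (∀ x, 0 ≤ x → 0 < f x) ∧
  ∃ c, 0 ≤ c ∧ ∃ K, 0 < K ∧
    ConvexOn ℝ (Set.Ici c) f ∧
    (∀ x y, c ≤ x → c ≤ y → f (x * y) ≤ K * f x * f y) ∧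
    ∃ M, ∀ x, 0 ≤ x → x < c → f x ≤ M

/-- Condition B with constant `K`: `f` is convex and nondecreasing on `[0,∞)`,
submultiplicative up to the constant `K`, and `f > 1` on `[0,∞)`. -/
def ConditionB (f : ℝ → ℝ) (K : ℝ) : Prop :=
  0 < K ∧ ConvexOn ℝ (Set.Ici 0) f ∧ MonotoneOn f (Set.Ici 0) ∧
  (∀ x y, 0 ≤ x → 0 ≤ y → f (x * y) ≤ K * f x * f y) ∧
  (∀ x, 0 ≤ x → 1 < f x)

/-- `φ` is a branching mechanism with parameters `β ∈ ℝ`, `σ ≥ 0` and Lévy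
measure `m` (a σ-finite measure carried by `(0,∞)` with `∫ 1 ∧ z² m(dz) < ∞`):
`φ(λ) = βλ + σ²λ²/2 + ∫ (e^{-zλ} - 1 + zλ 1_{z ≤ 1}) m(dz)`. -/
structure IsBranchingMechanism (φ : ℝ → ℝ) (β σ : ℝ) (m : Measure ℝ) : Prop where
  sigma_nonneg : 0 ≤ σ
  sigmaFinite : SigmaFinite m
  carrier : m (Set.Iic 0) = 0
  levy_finite : ∫⁻ z, ENNReal.ofReal (min 1 (z ^ 2)) ∂m < ⊤
  form : ∀ l, 0 ≤ l →
    φ l = β * l + σ ^ 2 * l ^ 2 / 2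
      + ∫ z, (Real.exp (-(z * l)) - 1 + (if z ≤ 1 then z * l else 0)) ∂m

/-- Grey's condition: `∫_{0+} φ(λ)⁻¹ dλ = ∞`, i.e. `φ⁻¹` fails to be
integrable on every right neighbourhood of `0`. -/
def GreyCondition (φ : ℝ → ℝ) : Prop :=
  ∀ ε, 0 < ε → ¬ IntegrableOn (fun l => (φ l)⁻¹) (Set.Ioo 0 ε) volume

/-- `v t l` is the nonnegative solution of `v_t(λ) = λ - ∫_0^t φ(v_s(λ)) ds`. -/
def IsCumulant (φ : ℝ → ℝ) (v : ℝ → ℝ → ℝ) : Prop :=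
  ∀ l, 0 ≤ l → ∀ t, 0 ≤ t →
    0 ≤ v t l ∧ v t l = l - ∫ s in (0:ℝ)..t, φ (v s l)

/-- `(Q t)_{t ≥ 0}` is the transition semigroup of the CB-process with cumulant
`v`: each `Q t x` is a probability measure on `[0,∞)` with Laplace transform
`∫ e^{-λ y} Q_t(x, dy) = e^{-x v_t(λ)}`. -/
def IsCBSemigroup (v : ℝ → ℝ → ℝ) (Q : ℝ → ℝ → Measure ℝ) : Prop :=
  ∀ t x, 0 ≤ t → 0 ≤ x →
    IsProbabilityMeasure (Q t x) ∧ Q t x (Set.Iio 0) = 0 ∧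
    ∀ l, 0 ≤ l → ∫ y, Real.exp (-(l * y)) ∂(Q t x) = Real.exp (-(x * v t l))

/-- `ψ` is an immigration mechanism with drift `h ≥ 0` and immigration measure
`ν` (a σ-finite measure carried by `(0,∞)` with `∫ 1 ∧ z ν(dz) < ∞`):
`ψ(λ) = hλ + ∫ (1 - e^{-λz}) ν(dz)`. -/
structure IsImmigrationMechanism (ψ : ℝ → ℝ) (h : ℝ) (ν : Measure ℝ) : Prop where
  h_nonneg : 0 ≤ h
  sigmaFinite : SigmaFinite ν
  carrier : ν (Set.Iic 0) = 0
  levy_finite : ∫⁻ z, ENNReal.ofReal (min 1 z) ∂ν < ⊤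
  form : ∀ l, 0 ≤ l → ψ l = h * l + ∫ z, (1 - Real.exp (-(l * z))) ∂ν

/-- `(Q^γ t)_{t ≥ 0}` is the transition semigroup of the CBI-process with
cumulant `v` and immigration mechanism `ψ`: each `Qγ t x` is a probability
measure on `[0,∞)` with Laplace transform
`∫ e^{-λ y} Q^γ_t(x, dy) = exp(-x v_t(λ) - ∫_0^t ψ(v_s(λ)) ds)`. -/
def IsCBISemigroup (v : ℝ → ℝ → ℝ) (ψ : ℝ → ℝ) (Qγ : ℝ → ℝ → Measure ℝ) : Prop :=
  ∀ t x, 0 ≤ t → 0 ≤ x →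
    IsProbabilityMeasure (Qγ t x) ∧ Qγ t x (Set.Iio 0) = 0 ∧
    ∀ l, 0 ≤ l →
      ∫ y, Real.exp (-(l * y)) ∂(Qγ t x)
        = Real.exp (-(x * v t l) - ∫ s in (0:ℝ)..t, ψ (v s l))


lemma ae_nonneg_of_null_Iio {μ : Measure ℝ} (h : μ (Set.Iio 0) = 0) : ∀ᵐ y ∂μ, 0 ≤ y := by
  rw [ae_iff]
  convert h using 2
  ext y
  simp [not_le]

lemma laplace_ext {μ1 μ2 : Measure ℝ} [IsProbabilityMeasure μ1] [IsProbabilityMeasure μ2]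
    (h1 : μ1 (Set.Iio 0) = 0) (h2 : μ2 (Set.Iio 0) = 0)
    (h : ∀ l : ℝ, 0 ≤ l → ∫ y, Real.exp (-(l * y)) ∂μ1 = ∫ y, Real.exp (-(l * y)) ∂μ2) :
    μ1 = μ2 := by
  set e : ℝ → ℝ := fun y => Real.exp (-y) with he
  have hecont : Continuous e := Real.continuous_exp.comp continuous_neg
  have heinj : Function.Injective e := fun a b hab => neg_injective (Real.exp_injective hab)
  have hemb : MeasurableEmbedding e := hecont.measurableEmbedding heinj
  have hmeas : Measurable e := hecont.measurable
  have hIcc : ∀ (μ' : Measure ℝ), μ' (Set.Iio 0) = 0 → (μ'.map e) (Set.Icc (0:ℝ) 1)ᶜ = 0 := by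
    intro μ' h0
    rw [Measure.map_apply hmeas (measurableSet_Icc.compl)]
    refine measure_mono_null ?_ h0
    intro y hy
    simp only [Set.mem_preimage, Set.mem_compl_iff, Set.mem_Icc, not_and_or, not_le] at hy
    rcases hy with hy | hy
    · exact absurd (Real.exp_pos _).le (not_le.mpr hy)
    · simp only [Set.mem_Iio]
      by_contra hc
      push_neg at hc
      have : Real.exp (-y) ≤ 1 := Real.exp_le_one_iff.mpr (by linarith)
      simp only [e] at hy
      linarith
  have hae1 : ∀ᵐ u ∂(μ1.map e), u ∈ Set.Icc (0:ℝ) 1 := by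
    rw [ae_iff]; exact hIcc μ1 h1
  have hae2 : ∀ᵐ u ∂(μ2.map e), u ∈ Set.Icc (0:ℝ) 1 := by
    rw [ae_iff]; exact hIcc μ2 h2
  haveI i1 : IsProbabilityMeasure (μ1.map e) := Measure.isProbabilityMeasure_map hmeas.aemeasurable
  haveI i2 : IsProbabilityMeasure (μ2.map e) := Measure.isProbabilityMeasure_map hmeas.aemeasurable
  have hpow : ∀ (n : ℕ), AEStronglyMeasurable (fun u : ℝ => u ^ n) (μ1.map e) ∧
      AEStronglyMeasurable (fun u : ℝ => u ^ n) (μ2.map e) :=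
    fun n => ⟨(continuous_pow n).measurable.aestronglyMeasurable,
      (continuous_pow n).measurable.aestronglyMeasurable⟩
  have hmom : ∀ n : ℕ, ∫ u, u ^ n ∂(μ1.map e) = ∫ u, u ^ n ∂(μ2.map e) := by
    intro n
    rw [integral_map hmeas.aemeasurable (hpow n).1, integral_map hmeas.aemeasurable (hpow n).2]
    have : ∀ y : ℝ, (e y) ^ n = Real.exp (-((n:ℝ) * y)) := by
      intro y
      rw [he]
      rw [← Real.exp_nat_mul]
      ring_nf
    simp only [this]
    exact h n (Nat.cast_nonneg n)
  have hmono_int : ∀ (ν : Measure ℝ) [IsProbabilityMeasure ν],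
      (∀ᵐ u ∂ν, u ∈ Set.Icc (0:ℝ) 1) → ∀ (n : ℕ), Integrable (fun u : ℝ => u ^ n) ν := by
    intro ν hP hae n
    refine ⟨(continuous_pow n).measurable.aestronglyMeasurable, ?_⟩
    refine HasFiniteIntegral.of_bounded (C := 1) ?_
    filter_upwards [hae] with u hu
    rw [Real.norm_eq_abs, abs_pow]
    exact pow_le_one₀ (abs_nonneg u) (abs_le.mpr ⟨by linarith [hu.1], hu.2⟩)
  have hqint : ∀ (ν : Measure ℝ) [IsProbabilityMeasure ν],
      (∀ᵐ u ∂ν, u ∈ Set.Icc (0:ℝ) 1) → ∀ q : Polynomial ℝ,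
      Integrable (fun u : ℝ => q.eval u) ν := by
    intro ν hP hae q
    have hev : (fun u : ℝ => q.eval u)
        = fun u => ∑ i ∈ Finset.range (q.natDegree + 1), q.coeff i * u ^ i := by
      funext u; rw [Polynomial.eval_eq_sum_range]
    rw [hev]
    exact integrable_finset_sum _ (fun i _ => (hmono_int ν hae i).const_mul _)
  have hpoly : ∀ q : Polynomial ℝ, ∫ u, q.eval u ∂(μ1.map e) = ∫ u, q.eval u ∂(μ2.map e) := by
    intro q
    have hev : (fun u : ℝ => q.eval u)
        = fun u => ∑ i ∈ Finset.range (q.natDegree + 1), q.coeff i * u ^ i := by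
      funext u; rw [Polynomial.eval_eq_sum_range]
    rw [hev]
    rw [integral_finset_sum _ (fun i _ => (hmono_int _ hae1 i).const_mul _),
      integral_finset_sum _ (fun i _ => (hmono_int _ hae2 i).const_mul _)]
    refine Finset.sum_congr rfl fun i _ => ?_
    rw [integral_const_mul, integral_const_mul, hmom i]
  have hmap : μ1.map e = μ2.map e := by
    apply ext_of_forall_lintegral_eq_of_IsFiniteMeasure
    intro G
    have hGint1 : Integrable (fun u : ℝ => (G u : ℝ)) (μ1.map e) :=
      BoundedContinuousFunction.integrable_of_nnreal (μ := μ1.map e) G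
    have hGint2 : Integrable (fun u : ℝ => (G u : ℝ)) (μ2.map e) :=
      BoundedContinuousFunction.integrable_of_nnreal (μ := μ2.map e) G
    have key : ∫ u, (G u : ℝ) ∂(μ1.map e) = ∫ u, (G u : ℝ) ∂(μ2.map e) := by
      by_contra hne
      set a := ∫ u, (G u : ℝ) ∂(μ1.map e) with ha
      set b := ∫ u, (G u : ℝ) ∂(μ2.map e) with hb
      set δ := |a - b| with hδ
      have hδpos : 0 < δ := abs_pos.mpr (sub_ne_zero.mpr hne)
      obtain ⟨q, hq⟩ := exists_polynomial_near_of_continuousOn 0 1 (fun u => (G u : ℝ))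
        ((NNReal.continuous_coe.comp G.continuous).continuousOn) (δ / 3) (by linarith)
      have hbd : ∀ (ν : Measure ℝ) [IsProbabilityMeasure ν],
          (∀ᵐ u ∂ν, u ∈ Set.Icc (0:ℝ) 1) → Integrable (fun u : ℝ => (G u : ℝ)) ν →
          |(∫ u, (G u : ℝ) ∂ν) - ∫ u, q.eval u ∂ν| ≤ δ / 3 := by
        intro ν hP hae hint
        rw [← integral_sub hint (hqint ν hae q), ← Real.norm_eq_abs]
        refine (norm_integral_le_of_norm_le (integrable_const (δ/3)) ?_).trans ?_
        · filter_upwards [hae] with u hu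
          have := hq u hu
          rw [Real.norm_eq_abs, abs_sub_comm]
          exact this.le
        · rw [integral_const]
          simp
      have hb1 := hbd (μ1.map e) hae1 hGint1
      have hb2 := hbd (μ2.map e) hae2 hGint2
      have h3 := hpoly q
      have e1 := abs_le.mp hb1
      have e2 := abs_le.mp hb2
      have : δ ≤ δ / 3 + δ / 3 := by
        have habs : |a - b| ≤ δ / 3 + δ / 3 :=
          abs_le.mpr ⟨by linarith [e1.1, e1.2, e2.1, e2.2, ha, hb, h3],
            by linarith [e1.1, e1.2, e2.1, e2.2, ha, hb, h3]⟩
        linarith [habs]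
      linarith
    have f1 : (∫⁻ u, (G u : ℝ≥0∞) ∂(μ1.map e)) ≠ ⊤ :=
      (BoundedContinuousFunction.lintegral_lt_top_of_nnreal _ G).ne
    have f2 : (∫⁻ u, (G u : ℝ≥0∞) ∂(μ2.map e)) ≠ ⊤ :=
      (BoundedContinuousFunction.lintegral_lt_top_of_nnreal _ G).ne
    have t1 := BoundedContinuousFunction.toReal_lintegral_coe_eq_integral G (μ1.map e)
    have t2 := BoundedContinuousFunction.toReal_lintegral_coe_eq_integral G (μ2.map e)
    exact (ENNReal.toReal_eq_toReal_iff' f1 f2).mp (by rw [t1, t2]; exact key)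
  ext s hs
  have h1' := congrArg (fun ρ : Measure ℝ => ρ (e '' s)) hmap
  simpa [hemb.map_apply, Set.preimage_image_eq _ heinj] using h1'

lemma conv_null {μa μb : Measure ℝ} [IsProbabilityMeasure μa] [IsProbabilityMeasure μb]
    (ha0 : μa (Set.Iio 0) = 0) (hb0 : μb (Set.Iio 0) = 0) :
    (Measure.map (fun p : ℝ × ℝ => p.1 + p.2) (μa.prod μb)) (Set.Iio 0) = 0 := by
  rw [Measure.map_apply (by fun_prop : Measurable (fun p : ℝ × ℝ => p.1 + p.2)) measurableSet_Iio]
  have hsub : (fun p : ℝ × ℝ => p.1 + p.2) ⁻¹' Set.Iio 0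
      ⊆ (Set.Iio 0 ×ˢ (Set.univ : Set ℝ)) ∪ ((Set.univ : Set ℝ) ×ˢ Set.Iio 0) := by
    rintro ⟨y, z⟩ hp
    simp only [Set.mem_preimage, Set.mem_Iio] at hp
    simp only [Set.mem_union, Set.mem_prod, Set.mem_univ, Set.mem_Iio, and_true, true_and]
    by_contra hc
    push_neg at hc
    linarith [hc.1, hc.2]
  refine measure_mono_null hsub (measure_union_null ?_ ?_) <;>
    rw [Measure.prod_prod] <;> simp [ha0, hb0]

lemma conv_eq {μa μb μc : Measure ℝ} [IsProbabilityMeasure μa] [IsProbabilityMeasure μb]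
    [IsProbabilityMeasure μc]
    (ha0 : μa (Set.Iio 0) = 0) (hb0 : μb (Set.Iio 0) = 0) (hc0 : μc (Set.Iio 0) = 0)
    (hL : ∀ l : ℝ, 0 ≤ l → ∫ y, Real.exp (-(l * y)) ∂μc
      = (∫ y, Real.exp (-(l * y)) ∂μa) * (∫ y, Real.exp (-(l * y)) ∂μb)) :
    μc = Measure.map (fun p : ℝ × ℝ => p.1 + p.2) (μa.prod μb) := by
  haveI : IsProbabilityMeasure (Measure.map (fun p : ℝ × ℝ => p.1 + p.2) (μa.prod μb)) :=
    Measure.isProbabilityMeasure_map (measurable_fst.add measurable_snd).aemeasurable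
  refine laplace_ext hc0 (conv_null ha0 hb0) ?_
  intro l hl
  rw [hL l hl, integral_map (by fun_prop : Measurable (fun p : ℝ × ℝ => p.1 + p.2)).aemeasurable
    (Continuous.aestronglyMeasurable (by continuity))]
  have : ∀ p : ℝ × ℝ, Real.exp (-(l * (p.1 + p.2)))
      = Real.exp (-(l * p.1)) * Real.exp (-(l * p.2)) := by
    intro p
    rw [← Real.exp_add]
    ring_nf
  simp only [this]
  exact (integral_prod_mul _ _).symm

lemma condB_add {f : ℝ → ℝ} {K : ℝ} (hK : 0 < K) (hconv : ConvexOn ℝ (Set.Ici 0) f)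
    (hsub : ∀ x y, 0 ≤ x → 0 ≤ y → f (x * y) ≤ K * f x * f y)
    (hgt : ∀ x, 0 ≤ x → 1 < f x) {y z : ℝ} (hy : 0 ≤ y) (hz : 0 ≤ z) :
    f (y + z) ≤ K * f 2 / 2 * (f y + f z) := by
  have h1 : f (y + z) = f (2 * ((y + z) / 2)) := by ring_nf
  have h2 : f (2 * ((y + z) / 2)) ≤ K * f 2 * f ((y + z) / 2) :=
    hsub 2 ((y + z) / 2) (by norm_num) (by positivity)
  have h3 : f ((y + z) / 2) ≤ (f y + f z) / 2 := by
    have hh := hconv.2 hy hz (by norm_num : (0:ℝ) ≤ 1/2) (by norm_num : (0:ℝ) ≤ 1/2) (by norm_num)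
    simp only [smul_eq_mul] at hh
    calc f ((y + z) / 2) = f (1/2 * y + 1/2 * z) := by ring_nf
      _ ≤ 1/2 * f y + 1/2 * f z := hh
      _ = (f y + f z) / 2 := by ring
  have hK2 : 0 ≤ K * f 2 := le_of_lt (mul_pos hK (lt_trans one_pos (hgt 2 (by norm_num))))
  calc f (y + z) = f (2 * ((y + z) / 2)) := h1
    _ ≤ K * f 2 * f ((y + z) / 2) := h2
    _ ≤ K * f 2 * ((f y + f z) / 2) := by
        exact mul_le_mul_of_nonneg_left h3 hK2
    _ = K * f 2 / 2 * (f y + f z) := by ring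


/-- Proposition 4.3: for a CB-process and a CBI-process with the same initial
law `μ`, `P f(Y_t) ≤ (1/2) K f(2) [∫ f dQ^γ_t(0,·) + P f(X_t)]`
as an inequality in `[0,∞]`. -/
theorem cbi_f_moment_bound
    (f : ℝ → ℝ) (K : ℝ) (hf : ConditionB f K)
    (φ : ℝ → ℝ) (β σ : ℝ) (m : Measure ℝ)
    (hφ : IsBranchingMechanism φ β σ m) (hGrey : GreyCondition φ)
    (ψ : ℝ → ℝ) (h : ℝ) (ν : Measure ℝ)
    (hψ : IsImmigrationMechanism ψ h ν)
    (v : ℝ → ℝ → ℝ) (hv : IsCumulant φ v)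
    (Q : ℝ → ℝ → Measure ℝ) (hQ : IsCBSemigroup v Q)
    (Qγ : ℝ → ℝ → Measure ℝ) (hQγ : IsCBISemigroup v ψ Qγ)
    (μ : Measure ℝ) (hμ : IsProbabilityMeasure μ) (hμ0 : μ (Set.Iio 0) = 0)
    (t : ℝ) (ht : 0 ≤ t) :
    (∫⁻ x, (∫⁻ y, ENNReal.ofReal (f y) ∂(Qγ t x)) ∂μ)
      ≤ ENNReal.ofReal (K * f 2 / 2)
          * ((∫⁻ y, ENNReal.ofReal (f y) ∂(Qγ t 0))
              + ∫⁻ x, (∫⁻ y, ENNReal.ofReal (f y) ∂(Q t x)) ∂μ) := by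
  
  obtain ⟨hK, hconvex, hmono, hsub, hgt⟩ := hf
  haveI := hμ
  set c := K * f 2 / 2 with hc
  have hf2 : 0 < f 2 := lt_trans one_pos (hgt 2 (by norm_num))
  have hc0 : 0 ≤ c := by positivity
  set g : ℝ → ℝ := fun y => f (max y 0) with hg
  have hgmono : Monotone g := fun a b hab =>
    hmono (le_max_right a 0) (le_max_right b 0) (max_le_max hab le_rfl)
  have hgmeas : Measurable g := hgmono.measurable
  have hg1 : ∀ y, 0 ≤ g y := fun y => le_of_lt (lt_trans one_pos (hgt _ (le_max_right y 0)))
  have hgf : ∀ y, 0 ≤ y → g y = f y := fun y hy => by rw [hg]; simp [max_eq_left hy]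
  have Lcongr : ∀ (ρ : Measure ℝ), ρ (Set.Iio 0) = 0 →
      ∫⁻ y, ENNReal.ofReal (f y) ∂ρ = ∫⁻ y, ENNReal.ofReal (g y) ∂ρ := by
    intro ρ h0
    refine lintegral_congr_ae ?_
    filter_upwards [ae_nonneg_of_null_Iio h0] with y hy
    rw [hgf y hy]
  obtain ⟨iG0, nG0, LG0⟩ := hQγ t 0 ht le_rfl
  haveI := iG0
  have key : ∀ x : ℝ, 0 ≤ x →
      ∫⁻ y, ENNReal.ofReal (f y) ∂(Qγ t x)
        ≤ ENNReal.ofReal c * ((∫⁻ y, ENNReal.ofReal (f y) ∂(Qγ t 0))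
            + ∫⁻ y, ENNReal.ofReal (f y) ∂(Q t x)) := by
    intro x hx
    obtain ⟨iQ, nQ, LQ⟩ := hQ t x ht hx
    obtain ⟨iG, nG, LG⟩ := hQγ t x ht hx
    haveI := iQ; haveI := iG
    set P := (Q t x).prod (Qγ t 0) with hP
    have hconvo : Qγ t x = Measure.map (fun p : ℝ × ℝ => p.1 + p.2) P := by
      refine conv_eq nQ nG0 nG ?_
      intro l hl
      rw [LG l hl, LQ l hl, LG0 l hl, ← Real.exp_add]
      congr 1
      ring
    have hm1 : ∀ᵐ p : ℝ × ℝ ∂P, 0 ≤ p.1 := by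
      rw [ae_iff]
      have hset : {p : ℝ × ℝ | ¬ 0 ≤ p.1} = Set.Iio 0 ×ˢ (Set.univ : Set ℝ) := by
        ext p; simp [not_le]
      rw [hset, hP, Measure.prod_prod]
      simp [nQ]
    have hm2 : ∀ᵐ p : ℝ × ℝ ∂P, 0 ≤ p.2 := by
      rw [ae_iff]
      have hset : {p : ℝ × ℝ | ¬ 0 ≤ p.2} = (Set.univ : Set ℝ) ×ˢ Set.Iio 0 := by
        ext p; simp [not_le]
      rw [hset, hP, Measure.prod_prod]
      simp [nG0]
    calc ∫⁻ y, ENNReal.ofReal (f y) ∂(Qγ t x)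
        = ∫⁻ y, ENNReal.ofReal (g y) ∂(Qγ t x) := Lcongr _ nG
      _ = ∫⁻ p : ℝ × ℝ, ENNReal.ofReal (g (p.1 + p.2)) ∂P := by
          rw [hconvo, lintegral_map hgmeas.ennreal_ofReal (by fun_prop : Measurable (fun p : ℝ × ℝ => p.1 + p.2))]
      _ ≤ ∫⁻ p : ℝ × ℝ, ENNReal.ofReal c
            * (ENNReal.ofReal (g p.1) + ENNReal.ofReal (g p.2)) ∂P := by
          refine lintegral_mono_ae ?_
          filter_upwards [hm1, hm2] with p hp1 hp2
          rw [← ENNReal.ofReal_add (hg1 _) (hg1 _), ← ENNReal.ofReal_mul hc0]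
          refine ENNReal.ofReal_le_ofReal ?_
          rw [hgf _ (add_nonneg hp1 hp2), hgf _ hp1, hgf _ hp2]
          exact condB_add hK hconvex hsub hgt hp1 hp2
      _ = ENNReal.ofReal c * ((∫⁻ p : ℝ × ℝ, ENNReal.ofReal (g p.1) ∂P)
            + ∫⁻ p : ℝ × ℝ, ENNReal.ofReal (g p.2) ∂P) := by
          have mfst : Measurable fun p : ℝ × ℝ => ENNReal.ofReal (g p.1) :=
            (hgmeas.comp measurable_fst).ennreal_ofReal
          rw [lintegral_const_mul' _ _ ENNReal.ofReal_ne_top, lintegral_add_left mfst]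
      _ = ENNReal.ofReal c * ((∫⁻ y, ENNReal.ofReal (g y) ∂(Q t x))
            + ∫⁻ y, ENNReal.ofReal (g y) ∂(Qγ t 0)) := by
          congr 1
          have e1 : ∫⁻ p : ℝ × ℝ, ENNReal.ofReal (g p.1) ∂P
              = ∫⁻ y, ENNReal.ofReal (g y) ∂(Q t x) := by
            have h' := (lintegral_map (μ := P) hgmeas.ennreal_ofReal measurable_fst).symm
            rwa [hP, Measure.map_fst_prod, measure_univ, one_smul] at h'
          have e2 : ∫⁻ p : ℝ × ℝ, ENNReal.ofReal (g p.2) ∂P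
              = ∫⁻ y, ENNReal.ofReal (g y) ∂(Qγ t 0) := by
            have h' := (lintegral_map (μ := P) hgmeas.ennreal_ofReal measurable_snd).symm
            rwa [hP, Measure.map_snd_prod, measure_univ, one_smul] at h'
          rw [e1, e2]
      _ = ENNReal.ofReal c * ((∫⁻ y, ENNReal.ofReal (f y) ∂(Qγ t 0))
            + ∫⁻ y, ENNReal.ofReal (f y) ∂(Q t x)) := by
          rw [← Lcongr _ nQ, ← Lcongr _ nG0, add_comm]
  calc ∫⁻ x, (∫⁻ y, ENNReal.ofReal (f y) ∂(Qγ t x)) ∂μ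
      ≤ ∫⁻ x, (ENNReal.ofReal c * ((∫⁻ y, ENNReal.ofReal (f y) ∂(Qγ t 0))
          + ∫⁻ y, ENNReal.ofReal (f y) ∂(Q t x))) ∂μ := by
        refine lintegral_mono_ae ?_
        filter_upwards [ae_nonneg_of_null_Iio hμ0] with x hx
        exact key x hx
    _ = ENNReal.ofReal c * ((∫⁻ y, ENNReal.ofReal (f y) ∂(Qγ t 0))
          + ∫⁻ x, (∫⁻ y, ENNReal.ofReal (f y) ∂(Q t x)) ∂μ) := by
        rw [lintegral_const_mul' _ _ ENNReal.ofReal_ne_top,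
          lintegral_add_left measurable_const, lintegral_const, measure_univ, mul_one]
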